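/- arXiv:2007.13893 — 2 statements merged into one kernel-verified Lean document; each statement's English description precedes it below -/
import Mathlib

section
/- Let α and β be measurable spaces, let K be a Markov kernel from α to β, and let μ and ν be probability measures on α with ν absolutely continuous with respect to μ. Let ρ = μ ⊗ₘ K be the measure on α × β determined by ρ(A × B) = ∫_A K(x)(B) dμ(x), and let μ′ = μ.bind K and ν′ = ν.bind K be the measures on β given by (μ.bind K)(B) = ∫ K(x)(B) dμ(x). Then the conditional expectation under ρ of the function (x,y) ↦ (dν/dμ)(x), taken with respect to the σ-algebra on α × β generated by the second coordinate projection, is ρ-almost everywhere equal to the function (x,y) ↦ (dν′/dμ′)(y). -/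
open MeasureTheory ProbabilityTheory
open scoped ProbabilityTheory

/-- Key displayed computation in the proof of the paper's Theorem 5: for a Markov kernel
`K` and `ν ≪ μ`, the conditional expectation under `ρ = μ ⊗ₘ K` of `(x,y) ↦ (dν/dμ)(x)`
given the σ-algebra generated by the second coordinate is a.e. `(x,y) ↦ (d(ν∘K)/d(μ∘K))(y)`. -/
theorem stmt_3 {α β : Type*} [MeasurableSpace α] [MeasurableSpace β]
    (K : Kernel α β) [IsMarkovKernel K]
    (μ ν : Measure α) [IsProbabilityMeasure μ] [IsProbabilityMeasure ν]
    (hac : ν ≪ μ) :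
    (μ ⊗ₘ K)[(fun p : α × β => (ν.rnDeriv μ p.1).toReal) |
        MeasurableSpace.comap (Prod.snd : α × β → β) inferInstance]
      =ᵐ[μ ⊗ₘ K]
    fun p : α × β => ((ν.bind K).rnDeriv (μ.bind K) p.2).toReal := by
  have hm : MeasurableSpace.comap (Prod.snd : α × β → β) inferInstance
      ≤ (inferInstance : MeasurableSpace (α × β)) := measurable_snd.comap_le
  have hKmeas : Measurable (fun a => K a) := K.measurable
  -- marginal on the second coordinate
  have hsnd : (μ ⊗ₘ K).map Prod.snd = μ.bind K := by
    ext s hs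
    rw [Measure.map_apply measurable_snd hs,
      Measure.compProd_apply (measurable_snd hs), Measure.bind_apply hs hKmeas.aemeasurable]
    congr 1
  have instν' : IsProbabilityMeasure (ν.bind K) := by
    constructor
    rw [Measure.bind_apply MeasurableSet.univ hKmeas.aemeasurable]
    simp
  have instμ' : IsProbabilityMeasure (μ.bind K) := by
    constructor
    rw [Measure.bind_apply MeasurableSet.univ hKmeas.aemeasurable]
    simp
  -- absolute continuity of the pushed-forward measures
  have hac' : ν.bind K ≪ μ.bind K := by
    refine Measure.AbsolutelyContinuous.mk fun s hs h0 => ?_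
    rw [Measure.bind_apply hs hKmeas.aemeasurable] at h0 ⊢
    have h0' : ∀ᵐ a ∂μ, K a s = 0 :=
      (lintegral_eq_zero_iff (K.measurable_coe hs)).mp h0
    have h0'' : ∀ᵐ a ∂ν, K a s = 0 := hac.ae_le h0'
    exact (lintegral_eq_zero_iff (K.measurable_coe hs)).mpr h0''
  -- the candidate function
  set g : α × β → ℝ := fun p => ((ν.bind K).rnDeriv (μ.bind K) p.2).toReal with hg_def
  have hg_meas : Measurable[MeasurableSpace.comap (Prod.snd : α × β → β) inferInstance] g := by
    have h1 : Measurable fun y : β => ((ν.bind K).rnDeriv (μ.bind K) y).toReal :=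
      (Measure.measurable_rnDeriv _ _).ennreal_toReal
    exact h1.comp (Measurable.of_comap_le le_rfl)
  -- integrability of f
  have hf_int : Integrable (fun p : α × β => (ν.rnDeriv μ p.1).toReal) (μ ⊗ₘ K) := by
    have h1 : Integrable (fun x => (ν.rnDeriv μ x).toReal) μ :=
      Measure.integrable_toReal_rnDeriv
    have hmap : (μ ⊗ₘ K).map Prod.fst = μ := Measure.fst_compProd μ K
    have := (integrable_map_measure
      (f := Prod.fst) (g := fun x => (ν.rnDeriv μ x).toReal)
      (by rw [hmap]; exact h1.1) measurable_fst.aemeasurable).mp (by rwa [hmap])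
    exact this
  -- integrability of g
  have hg_int : Integrable g (μ ⊗ₘ K) := by
    have h1 : Integrable (fun y => ((ν.bind K).rnDeriv (μ.bind K) y).toReal) (μ.bind K) :=
      Measure.integrable_toReal_rnDeriv
    have := (integrable_map_measure
      (f := Prod.snd) (g := fun y => ((ν.bind K).rnDeriv (μ.bind K) y).toReal)
      (by rw [hsnd]; exact h1.1) measurable_snd.aemeasurable).mp (by rwa [hsnd])
    exact this
  refine (ae_eq_condExp_of_forall_setIntegral_eq hm hf_int
    (fun s _ _ => hg_int.integrableOn)
    (fun s hs _ => ?_)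
    (StronglyMeasurable.aestronglyMeasurable
      (hg_meas.stronglyMeasurable))).symm
  -- the set s is a preimage under snd
  obtain ⟨t, ht, rfl⟩ := hs
  -- integral of g over snd ⁻¹' t
  have hgs : ∫ p in Prod.snd ⁻¹' t, g p ∂(μ ⊗ₘ K) = ((ν.bind K) t).toReal := by
    have h2 : ∫ p in Prod.snd ⁻¹' t, g p ∂(μ ⊗ₘ K)
        = ∫ y in t, ((ν.bind K).rnDeriv (μ.bind K) y).toReal ∂((μ ⊗ₘ K).map Prod.snd) :=
      (setIntegral_map ht ((Measure.measurable_rnDeriv _ _).ennreal_toReal).aestronglyMeasurable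
        measurable_snd.aemeasurable).symm
    rw [h2, hsnd, Measure.setIntegral_toReal_rnDeriv hac' t]; rfl
  -- integral of f over snd ⁻¹' t
  have hfs : ∫ p in Prod.snd ⁻¹' t, (ν.rnDeriv μ p.1).toReal ∂(μ ⊗ₘ K)
      = ((ν.bind K) t).toReal := by
    have hset : (Prod.snd ⁻¹' t : Set (α × β)) = Set.univ ×ˢ t := by
      ext p; simp
    rw [hset, Measure.setIntegral_compProd MeasurableSet.univ ht
      (hf_int.integrableOn)]
    have hinner : ∀ x : α, ∫ _ in t, (ν.rnDeriv μ x).toReal ∂(K x)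
        = (ν.rnDeriv μ x).toReal • ((K x) t).toReal := by
      intro x
      rw [setIntegral_const, smul_eq_mul, mul_comm]
      simp [smul_eq_mul, mul_comm, Measure.real]
    simp_rw [hinner]
    rw [setIntegral_univ, integral_rnDeriv_smul hac]
    rw [Measure.bind_apply ht hKmeas.aemeasurable]
    rw [integral_toReal (K.measurable_coe ht).aemeasurable
      (Filter.Eventually.of_forall fun x => measure_lt_top _ _)]
  rw [hgs, hfs]
end

section
/- Let α be a measurable space, let K be a Markov kernel from α to α, and let μ and ν be probability measures on α that are both invariant under K (that is, μ.bind K = μ and ν.bind K = ν) with ν absolutely continuous with respect to μ. Write d = dν/dμ and let ρ = μ ⊗ₘ K be the measure on α × α. Then the conditional expectation under ρ of the function (x,y) ↦ d(x), taken with respect to the σ-algebra generated by the second coordinate projection, is ρ-almost everywhere equal to the function (x,y) ↦ d(y). -/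
open MeasureTheory ProbabilityTheory
open scoped ProbabilityTheory

/-- Forward direction of the paper's Theorem 5 in abstract combined-state form:
if `μ` and `ν` are both invariant under the Markov kernel `K` and `ν ≪ μ`, the
stationary density ratio `d = dν/dμ` satisfies `E_{μ ⊗ₘ K}[d(X) | X′] = d(X′)` a.e. -/
theorem stmt_4 {α : Type*} [MeasurableSpace α]
    (K : Kernel α α) [IsMarkovKernel K]
    (μ ν : Measure α) [IsProbabilityMeasure μ] [IsProbabilityMeasure ν]
    (hμinv : μ.bind K = μ) (hνinv : ν.bind K = ν)
    (hac : ν ≪ μ)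
    (d : α → ℝ) (hd : d = fun x => (ν.rnDeriv μ x).toReal) :
    (μ ⊗ₘ K)[(fun p : α × α => d p.1) |
        MeasurableSpace.comap (Prod.snd : α × α → α) inferInstance]
      =ᵐ[μ ⊗ₘ K] fun p : α × α => d p.2 := by
  set ρ : Measure (α × α) := μ ⊗ₘ K with hρ
  have hm : MeasurableSpace.comap (Prod.snd : α × α → α) inferInstance ≤
      (inferInstance : MeasurableSpace (α × α)) := measurable_snd.comap_le
  have hd_meas : Measurable d := by
    rw [hd]; exact (Measure.measurable_rnDeriv ν μ).ennreal_toReal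
  have hdμ : Integrable d μ := by rw [hd]; exact Measure.integrable_toReal_rnDeriv
  -- second marginal of ρ is μ
  have hmap : ρ.map Prod.snd = μ := by
    ext s hs
    rw [Measure.map_apply measurable_snd hs, hρ,
      Measure.compProd_apply (measurable_snd hs)]
    have : ∀ a : α, (Prod.mk a) ⁻¹' (Prod.snd ⁻¹' s) = s := fun a => rfl
    simp_rw [this]
    rw [← Measure.bind_apply hs (Kernel.measurable K).aemeasurable, hμinv]
  have hmapf : ρ.map Prod.fst = μ := by
    have := Measure.fst_compProd μ K
    rw [Measure.fst] at this
    exact this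
  -- integrability of the two functions on ρ
  have hf_int : Integrable (fun p : α × α => d p.1) ρ := by
    have := (integrable_map_measure hd_meas.aestronglyMeasurable
      measurable_fst.aemeasurable (μ := ρ)).mp (by rwa [hmapf])
    exact this
  have hg_int : Integrable (fun p : α × α => d p.2) ρ := by
    have := (integrable_map_measure hd_meas.aestronglyMeasurable
      measurable_snd.aemeasurable (μ := ρ)).mp (by rwa [hmap])
    exact this
  haveI : IsProbabilityMeasure ρ := by rw [hρ]; infer_instance
  haveI : SigmaFinite (ρ.trim hm) := by
    haveI : IsFiniteMeasure (ρ.trim hm) := isFiniteMeasure_trim hm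
    infer_instance
  -- strong measurability of the candidate w.r.t. the comap σ-algebra
  have hgm : StronglyMeasurable[MeasurableSpace.comap (Prod.snd : α × α → α) inferInstance]
      (fun p : α × α => d p.2) := by
    refine Measurable.stronglyMeasurable ?_
    exact hd_meas.comp (Measurable.of_comap_le le_rfl)
  refine (ae_eq_condExp_of_forall_setIntegral_eq hm hf_int
    (fun s _ _ => hg_int.integrableOn) ?_ hgm.aestronglyMeasurable).symm
  rintro s ⟨t, ht, rfl⟩ -
  -- both sides equal (ν t).toReal
  have hpre : (Prod.snd : α × α → α) ⁻¹' t = Set.univ ×ˢ t := by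
    ext p; simp
  have hRHS : ∫ p in Prod.snd ⁻¹' t, d p.2 ∂ρ = (ν t).toReal := by
    have : ∫ p in Prod.snd ⁻¹' t, d p.2 ∂ρ = ∫ y in t, d y ∂(ρ.map Prod.snd) := by
      rw [setIntegral_map ht hd_meas.aestronglyMeasurable
        measurable_snd.aemeasurable]
    rw [this, hmap, hd]
    exact Measure.setIntegral_toReal_rnDeriv hac t
  have hLHS : ∫ p in Prod.snd ⁻¹' t, d p.1 ∂ρ = (ν t).toReal := by
    rw [hpre, hρ, Measure.setIntegral_compProd MeasurableSet.univ ht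
      (by rw [← hρ, ← hpre]; exact hf_int.integrableOn)]
    simp_rw [integral_const, measureReal_restrict_apply_univ, smul_eq_mul, Measure.restrict_univ]
    calc ∫ x, ((K x) t).toReal * d x ∂μ
        = ∫ x, (ν.rnDeriv μ x).toReal • (((K x) t).toReal) ∂μ := by
          simp_rw [hd, smul_eq_mul, mul_comm]
      _ = ∫ x, ((K x) t).toReal ∂ν := integral_rnDeriv_smul hac
      _ = (ν t).toReal := by
          rw [integral_toReal ((Kernel.measurable_coe K ht).aemeasurable)
            (Filter.Eventually.of_forall fun x => measure_lt_top _ _)]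
          congr 1
          rw [← Measure.bind_apply ht (Kernel.measurable K).aemeasurable, hνinv]
  rw [hRHS, hLHS]
end
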